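/- Let γ₁, γ₂ ∈ ℂ be nonzero with γ₁ ≠ γ₂ and γ₁ ≠ −conj(γ₂), and let v₁, v₂, w₁, w₂ ∈ ℂ satisfy (v₁, w₁) ≠ (0,0) and (v₂, w₂) ≠ (0,0). For (x,t) ∈ ℝ² set φ_k := γ_k·t + γ_k⁻¹·x for k = 1, 2. Then for all (x,t) ∈ ℝ²: |γ₁ + conj(γ₂)|² · | v₂·w₁·exp(φ₁) − v₁·w₂·exp(φ₂) |² + |γ₁ − γ₂|² · | v₁·conj(v₂) + w₁·conj(w₂)·exp(φ₁ + conj(φ₂)) |² > 0. (This expresses that the determinant of the matrix Ω associated with the 2-soliton solution never vanishes, so the 2-soliton solution is regular.) -/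
import Mathlib


theorem stmt_10 (γ₁ γ₂ : ℂ) (hγ₁ : γ₁ ≠ 0) (hγ₂ : γ₂ ≠ 0)
    (hne : γ₁ ≠ γ₂) (hne' : γ₁ ≠ -(starRingEnd ℂ) γ₂)
    (v₁ v₂ w₁ w₂ : ℂ) (h1 : (v₁, w₁) ≠ (0, 0)) (h2 : (v₂, w₂) ≠ (0, 0))
    (x t : ℝ) (φ₁ φ₂ : ℂ)
    (hφ₁ : φ₁ = γ₁ * (t : ℂ) + γ₁⁻¹ * (x : ℂ))
    (hφ₂ : φ₂ = γ₂ * (t : ℂ) + γ₂⁻¹ * (x : ℂ)) :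
    0 < Complex.normSq (γ₁ + (starRingEnd ℂ) γ₂) *
          Complex.normSq (v₂ * w₁ * Complex.exp φ₁ - v₁ * w₂ * Complex.exp φ₂)
        + Complex.normSq (γ₁ - γ₂) *
          Complex.normSq (v₁ * (starRingEnd ℂ) v₂
            + w₁ * (starRingEnd ℂ) w₂ * Complex.exp (φ₁ + (starRingEnd ℂ) φ₂)) := by
  by_contra h
  push_neg at h
  set E₁ := Complex.exp φ₁ with hE₁def
  set E₂ := Complex.exp φ₂ with hE₂def
  have hE : Complex.exp (φ₁ + (starRingEnd ℂ) φ₂) = E₁ * (starRingEnd ℂ) E₂ := by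
    rw [Complex.exp_add, ← Complex.exp_conj]
  set A := v₂ * w₁ * E₁ - v₁ * w₂ * E₂ with hAdef
  set B := v₁ * (starRingEnd ℂ) v₂
      + w₁ * (starRingEnd ℂ) w₂ * (E₁ * (starRingEnd ℂ) E₂) with hBdef
  rw [hE] at h
  have hg1 : (0:ℝ) < Complex.normSq (γ₁ + (starRingEnd ℂ) γ₂) := by
    rw [Complex.normSq_pos]
    intro hc
    exact hne' (by linear_combination hc)
  have hg2 : (0:ℝ) < Complex.normSq (γ₁ - γ₂) := by
    rw [Complex.normSq_pos]
    intro hc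
    exact hne (by linear_combination hc)
  have hnA : (0:ℝ) ≤ Complex.normSq A := Complex.normSq_nonneg A
  have hnB : (0:ℝ) ≤ Complex.normSq B := Complex.normSq_nonneg B
  have hA0 : A = 0 := by
    rw [← Complex.normSq_eq_zero]
    nlinarith
  have hB0 : B = 0 := by
    rw [← Complex.normSq_eq_zero]
    nlinarith
  have hE₁ : E₁ ≠ 0 := Complex.exp_ne_zero φ₁
  have hE₂ : E₂ ≠ 0 := Complex.exp_ne_zero φ₂
  -- S = |v₂|² + |w₂|²|E₂|²  ≠ 0
  set S : ℂ := v₂ * (starRingEnd ℂ) v₂ + w₂ * (starRingEnd ℂ) w₂ *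
      (E₂ * (starRingEnd ℂ) E₂) with hSdef
  have hSval : S = ((Complex.normSq v₂ + Complex.normSq w₂ * Complex.normSq E₂ : ℝ) : ℂ) := by
    rw [hSdef]
    push_cast
    rw [← Complex.mul_conj, ← Complex.mul_conj, ← Complex.mul_conj]
  have hSpos : (0:ℝ) < Complex.normSq v₂ + Complex.normSq w₂ * Complex.normSq E₂ := by
    have : v₂ ≠ 0 ∨ w₂ ≠ 0 := by
      by_contra hc; push_neg at hc
      exact h2 (by simp [hc.1, hc.2])
    have hE₂pos : (0:ℝ) < Complex.normSq E₂ := Complex.normSq_pos.2 hE₂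
    rcases this with hv | hw
    · have := Complex.normSq_pos.2 hv
      nlinarith [Complex.normSq_nonneg w₂]
    · have := Complex.normSq_pos.2 hw
      nlinarith [Complex.normSq_nonneg v₂]
  have hSne : S ≠ 0 := by
    rw [hSval]
    exact_mod_cast ne_of_gt hSpos
  have key1 : w₁ * E₁ * S = w₂ * E₂ * B + (starRingEnd ℂ) v₂ * A := by
    rw [hSdef, hBdef, hAdef]; ring
  have key2 : v₁ * S = v₂ * B - (starRingEnd ℂ) w₂ * (starRingEnd ℂ) E₂ * A := by
    rw [hSdef, hBdef, hAdef]; ring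
  rw [hA0, hB0] at key1 key2
  simp only [mul_zero, zero_mul, add_zero, sub_zero, zero_sub, neg_zero] at key1 key2
  have hw₁ : w₁ = 0 := by
    rcases mul_eq_zero.1 key1 with h' | h'
    · rcases mul_eq_zero.1 h' with h'' | h''
      exacts [h'', absurd h'' hE₁]
    · exact absurd h' hSne
  have hv₁ : v₁ = 0 := by
    rcases mul_eq_zero.1 key2 with h' | h'
    exacts [h', absurd h' hSne]
  exact h1 (by simp [hv₁, hw₁])
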